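/- Let V be a Novikov algebra with operation ∘ and let a(z), b(z), c(z) be formal distributions over V such that a(w)∘c(z)·(w−z)^N = 0 for some N ∈ ℤ₊, and the pair (b(z), c(z)) is local. Then for every n ∈ ℤ₊, a(w)∘(b₍ₙ₎c)(z)·(w−z)^N = 0; i.e., the pair (a(z), (b₍ₙ₎c)(z)) is local with locality value at most N. (The proof uses only left commutativity x∘(y∘z) = y∘(x∘z).) -/
import Mathlib


variable {k V : Type*} [Field k] [CharZero k] [AddCommGroup V] [Module k V]

/-- `Σ_{s=0}^{N} (−1)^s C(N,s) a_{n−s} ∘ b_{m+s}`. -/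
def locSum (mul : V →ₗ[k] V →ₗ[k] V) (a b : ℤ → V) (N : ℕ) (n m : ℤ) : V :=
  ∑ s ∈ Finset.range (N + 1),
    ((-1) ^ s * (N.choose s) : ℤ) • mul (a (n - (s : ℤ))) (b (m + (s : ℤ)))

/-- The `n`-th product `(b₍ₙ₎c)(z)`: `(b₍ₙ₎c)ₘ = Σ_{s≥0} (−1)^s C(n,s) b_{n−s} ∘ c_{m+s}`. -/
def nProd (mul : V →ₗ[k] V →ₗ[k] V) (b c : ℤ → V) (n : ℕ) : ℤ → V :=
  fun m => locSum mul b c n (n : ℤ) m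

/-- Let `V` be a Novikov algebra, and let `a(z), b(z), c(z)` be formal distributions over
`V` such that `a(w) ∘ c(z) (w−z)^N = 0` and `(b(z), c(z))` is a local pair. Then for every
`n ∈ ℤ₊`, `a(w) ∘ (b₍ₙ₎c)(z) (w−z)^N = 0`: the pair `(a(z), (b₍ₙ₎c)(z))` is local with
locality value at most `N`. -/
theorem stmt_11 (mul : V →ₗ[k] V →ₗ[k] V)
    (rsym : ∀ x y z : V,
      mul (mul x y) z - mul x (mul y z) = mul (mul x z) y - mul x (mul z y))
    (lcom : ∀ x y z : V, mul x (mul y z) = mul y (mul x z))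
    (a b c : ℤ → V) (N : ℕ)
    (hac : ∀ n m : ℤ, locSum mul a c N n m = 0)
    (hbc : ∃ M : ℕ, ∀ n m : ℤ, locSum mul b c M n m = 0) :
    ∀ n : ℕ, ∀ p q : ℤ, locSum mul a (nProd mul b c n) N p q = 0 := by
  intro n p q
  simp only [locSum, nProd, map_sum, LinearMap.map_smul_of_tower, Finset.smul_sum, smul_smul]
  rw [Finset.sum_comm]
  refine Finset.sum_eq_zero fun t _ => ?_
  have h : ∀ s : ℤ, (q + s + t) = (q + t) + s := by intro s; ring
  calc ∑ s ∈ Finset.range (N + 1),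
        (((-1) ^ s * (N.choose s) : ℤ) * ((-1) ^ t * (n.choose t) : ℤ)) •
          mul (a (p - s)) (mul (b (n - t)) (c (q + s + t)))
      = ((-1) ^ t * (n.choose t) : ℤ) •
          mul (b (n - t)) (locSum mul a c N p (q + t)) := by
        rw [locSum, map_sum, Finset.smul_sum]
        refine Finset.sum_congr rfl fun s _ => ?_
        rw [lcom, h s, LinearMap.map_smul_of_tower, smul_smul, mul_comm]
    _ = 0 := by rw [hac, map_zero, smul_zero]
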